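/- Let G be a nontrivial Polish group with a countable basis V_0 ⊇ V_1 ⊇ ⋯ of open neighbourhoods of the identity, and let S ⊆ ℕ be infinite. Suppose the set A(S') = {g ∈ G : ∃s ∈ S', g^s = 1} is dense in G for every infinite S' ⊆ S. Then the set C(S) = {g ∈ G : there is a sequence (s_k) in S with g^{s_k} → 1} is a dense G_δ subset of G. -/

import Mathlib

open Filter Topology

/-- Let `G` be a nontrivial Polish group with a countable decreasing basis `V 0 ⊇ V 1 ⊇ ⋯` of
open neighbourhoods of the identity, and let `S ⊆ ℕ` be infinite. Suppose that for every
infinite `S' ⊆ S` the set `A(S') = {g : ∃ s ∈ S', g ^ s = 1}` is dense in `G`. Then the set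
`C(S) = {g : ∃ increasing (s_k) in S, g ^ (s_k) → 1}` is a dense `G_δ` subset of `G`. -/
theorem stmt15 {G : Type*} [Group G] [TopologicalSpace G] [IsTopologicalGroup G] [PolishSpace G]
    [Nontrivial G]
    (V : ℕ → Set G) (hVopen : ∀ k, IsOpen (V k)) (hV1 : ∀ k, (1 : G) ∈ V k)
    (hdec : ∀ k, V (k + 1) ⊆ V k)
    (hbasis : (𝓝 (1 : G)).HasBasis (fun _ : ℕ => True) V)
    (S : Set ℕ) (hS : S.Infinite)
    (hA : ∀ S' ⊆ S, S'.Infinite → Dense {g : G | ∃ s ∈ S', g ^ s = 1}) :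
    Dense {g : G | ∃ u : ℕ → ℕ, StrictMono u ∧ (∀ k, u k ∈ S) ∧
        Tendsto (fun k => g ^ u k) atTop (𝓝 1)} ∧
    IsGδ {g : G | ∃ u : ℕ → ℕ, StrictMono u ∧ (∀ k, u k ∈ S) ∧
        Tendsto (fun k => g ^ u k) atTop (𝓝 1)} := by
  letI := TopologicalSpace.upgradeIsCompletelyMetrizable G
  have hanti : ∀ {j k : ℕ}, j ≤ k → V k ⊆ V j := by
    intro j k h
    induction h with
    | refl => exact subset_rfl
    | step _ ih => exact (hdec _).trans ih
  set B : ℕ → Set G := fun k => {g | ∃ m, m ∈ S ∧ k < m ∧ g ^ m ∈ V k} with hBdef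
  have hCeq : {g : G | ∃ u : ℕ → ℕ, StrictMono u ∧ (∀ k, u k ∈ S) ∧
      Tendsto (fun k => g ^ u k) atTop (𝓝 1)} = ⋂ k, B k := by
    ext g
    simp only [Set.mem_setOf_eq, Set.mem_iInter]
    constructor
    · rintro ⟨u, hu, huS, htend⟩ k
      have hev : ∀ᶠ n in atTop, g ^ u n ∈ V k :=
        htend (hbasis.mem_of_mem (i := k) trivial)
      obtain ⟨N, hN⟩ := eventually_atTop.1 hev
      refine ⟨u (max N (k + 1)), huS _, ?_, hN _ (le_max_left _ _)⟩
      calc k < k + 1 := Nat.lt_succ_self k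
        _ ≤ max N (k + 1) := le_max_right _ _
        _ ≤ u (max N (k + 1)) := hu.le_apply
    · intro h
      choose m hmS hmgt hmV using h
      set u : ℕ → ℕ := fun n => Nat.rec (m 0) (fun n prev => m (max prev (n + 1))) n with hudef
      have hu0 : u 0 = m 0 := rfl
      have husucc : ∀ n, u (n + 1) = m (max (u n) (n + 1)) := fun n => rfl
      have humono : StrictMono u := by
        apply strictMono_nat_of_lt_succ
        intro n
        rw [husucc]
        exact lt_of_le_of_lt (le_max_left _ _) (hmgt _)
      have huV : ∀ n, g ^ u n ∈ V n := by
        intro n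
        cases n with
        | zero => exact hmV 0
        | succ n =>
          rw [husucc]
          exact hanti (le_max_right (u n) (n + 1)) (hmV _)
      refine ⟨u, humono, ?_, ?_⟩
      · intro n
        cases n with
        | zero => exact hmS 0
        | succ n => rw [husucc]; exact hmS _
      · rw [hbasis.tendsto_right_iff]
        intro k _
        filter_upwards [eventually_ge_atTop k] with n hn
        exact hanti hn (huV n)
  have hBopen : ∀ k, IsOpen (B k) := by
    intro k
    have : B k = ⋃ m ∈ {m : ℕ | m ∈ S ∧ k < m}, (fun g : G => g ^ m) ⁻¹' V k := by
      ext g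
      simp only [hBdef, Set.mem_setOf_eq, Set.mem_iUnion, Set.mem_preimage]
      tauto
    rw [this]
    exact isOpen_biUnion fun m _ => (hVopen k).preimage (continuous_pow m)
  have hBdense : ∀ k, Dense (B k) := by
    intro k
    have hsub : {s | s ∈ S ∧ k < s} ⊆ S := fun s hs => hs.1
    have hinf : {s | s ∈ S ∧ k < s}.Infinite := by
      have : {s | s ∈ S ∧ k < s} = S \ {s | s ≤ k} := by
        ext s; simp [Nat.not_le]
      rw [this]
      exact hS.diff (Set.finite_le_nat k)
    refine (hA _ hsub hinf).mono ?_
    rintro g ⟨s, ⟨hsS, hks⟩, hgs⟩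
    exact ⟨s, hsS, hks, hgs ▸ hV1 k⟩
  rw [hCeq]
  exact ⟨dense_iInter_of_isOpen hBopen hBdense, .iInter fun k => (hBopen k).isGδ⟩
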